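/- Let \gamma > 0 and d \geq 2. With \lambda_n(\gamma,d) and \mu_n(\gamma,d) as defined for the family BD(\gamma,d), the ratio satisfies \lambda_n(\gamma,d)/\mu_n(\gamma,d) = 1 + (d-1)/n + O(1/n^2) as n \to \infty. -/

import Mathlib

open Finset

/-- Birth rates of the family `BD(γ,d)`. -/
noncomputable def bdLambda (γ : ℝ) (d n : ℕ) : ℝ :=
  (∑ i ∈ Finset.Icc 1 d, (i : ℝ) * γ ^ i * (d.choose i) * ((n - 1).choose (i - 1)))
    + γ * ∑ i ∈ Finset.Icc 1 (d - 1),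
        ((d : ℝ) - i) * γ ^ i * (d.choose i) * ((n - 1).choose (i - 1))

/-- Death rates of the family `BD(γ,d)`. -/
noncomputable def bdMu (γ : ℝ) (d n : ℕ) : ℝ :=
  ∑ i ∈ Finset.Icc 1 d, (i : ℝ) * γ ^ i * (d.choose i) * ((n - 1).choose (i - 1))

private lemma choose_O' (k : ℕ) :
    (fun n : ℕ => (((n - 1).choose k : ℕ) : ℝ)) =O[Filter.atTop] fun n : ℕ => (n : ℝ) ^ k := by
  apply Asymptotics.IsBigO.of_bound 1
  filter_upwards [] with n
  have hc : (((n - 1).choose k : ℕ) : ℝ) ≤ (n : ℝ) ^ k := by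
    exact_mod_cast le_trans (Nat.choose_le_pow _ _) (Nat.pow_le_pow_left (Nat.sub_le n 1) k)
  rw [one_mul, Real.norm_eq_abs, Real.norm_eq_abs, abs_of_nonneg (by positivity),
    abs_of_nonneg (by positivity)]
  exact hc

private lemma mul_choose_O' (k : ℕ) :
    (fun n : ℕ => (n : ℝ) * (((n - 1).choose k : ℕ) : ℝ)) =O[Filter.atTop]
      fun n : ℕ => (n : ℝ) ^ (k + 1) := by
  apply Asymptotics.IsBigO.of_bound 1
  filter_upwards [] with n
  have hc : (((n - 1).choose k : ℕ) : ℝ) ≤ (n : ℝ) ^ k := by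
    exact_mod_cast le_trans (Nat.choose_le_pow _ _) (Nat.pow_le_pow_left (Nat.sub_le n 1) k)
  rw [one_mul, Real.norm_eq_abs, Real.norm_eq_abs, abs_of_nonneg (by positivity),
    abs_of_nonneg (by positivity), pow_succ, mul_comm ((n:ℝ)^k)]
  exact mul_le_mul_of_nonneg_left hc (by positivity)

private lemma pow_O' (a b : ℕ) (h : a ≤ b) :
    (fun n : ℕ => (n : ℝ) ^ a) =O[Filter.atTop] fun n : ℕ => (n : ℝ) ^ b := by
  apply Asymptotics.IsBigO.of_bound 1
  filter_upwards [Filter.eventually_ge_atTop 1] with n hn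
  have h1 : (1 : ℝ) ≤ n := by exact_mod_cast hn
  rw [one_mul, Real.norm_eq_abs, Real.norm_eq_abs, abs_of_nonneg (by positivity),
    abs_of_nonneg (by positivity)]
  exact pow_le_pow_right₀ h1 h

theorem stmt_6 (γ : ℝ) (hγ : 0 < γ) (d : ℕ) (hd : 2 ≤ d) :
    (fun n : ℕ => bdLambda γ d n / bdMu γ d n - (1 + ((d : ℝ) - 1) / n))
      =O[Filter.atTop] (fun n : ℕ => 1 / (n : ℝ) ^ 2) := by
  obtain ⟨e, rfl⟩ : ∃ e, d = e + 2 := ⟨d - 2, by omega⟩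
  set S : ℕ → ℝ := fun n => ∑ i ∈ Finset.Icc 1 (e + 1),
      (((e + 2 : ℕ) : ℝ) - i) * γ ^ i * ((e + 2).choose i) * ((n - 1).choose (i - 1)) with hSdef
  set S' : ℕ → ℝ := fun n => ∑ i ∈ Finset.Icc 1 e,
      (((e + 2 : ℕ) : ℝ) - i) * γ ^ i * ((e + 2).choose i) * ((n - 1).choose (i - 1)) with hS'def
  set P : ℕ → ℝ := fun n => ∑ i ∈ Finset.Icc 1 (e + 1),
      (i : ℝ) * γ ^ i * ((e + 2).choose i) * ((n - 1).choose (i - 1)) with hPdef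
  set N : ℕ → ℝ := fun n => (n : ℝ) * (γ * S n) - (((e + 2 : ℕ) : ℝ) - 1) * bdMu γ (e + 2) n
    with hNdef
  set M : ℕ → ℝ := fun n => (n : ℝ) * (γ * S' n) - (((e + 2 : ℕ) : ℝ) - 1) * P n
      + ((e : ℝ) + 2) * γ ^ (e + 2) * ((e : ℝ) + 1) * ((n - 1).choose e) with hMdef
  have hlam : ∀ n, bdLambda γ (e + 2) n = bdMu γ (e + 2) n + γ * S n := fun n => rfl
  have hμpos : ∀ n : ℕ, 0 < bdMu γ (e + 2) n := by
    intro n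
    unfold bdMu
    apply Finset.sum_pos'
    · intro i _; positivity
    · refine ⟨1, by simp, ?_⟩
      simp [Nat.choose_one_right]
      positivity
  -- eventual equality of the LHS with N n / (n * μ n)
  have heq : ∀ n : ℕ, 1 ≤ n →
      bdLambda γ (e + 2) n / bdMu γ (e + 2) n - (1 + (((e + 2 : ℕ) : ℝ) - 1) / n)
        = N n / ((n : ℝ) * bdMu γ (e + 2) n) := by
    intro n hn
    have hμ := hμpos n
    have hn0 : (0 : ℝ) < n := by exact_mod_cast hn
    rw [hlam n, hNdef]
    field_simp
    ring
  -- N = M eventually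
  have hNM : ∀ n : ℕ, e + 2 ≤ n → N n = M n := by
    intro n hn
    have hid : (((n - 1).choose (e + 1) : ℕ) : ℝ) * ((e : ℝ) + 1)
        = ((n : ℝ) - ((e : ℝ) + 1)) * (((n - 1).choose e : ℕ) : ℝ) := by
      have h0 := Nat.choose_succ_right_eq (n - 1) e
      have h1 : (n - 1) - e = n - (e + 1) := by omega
      rw [h1] at h0
      have h2 : (((n - (e + 1) : ℕ)) : ℝ) = (n : ℝ) - ((e : ℝ) + 1) := by
        rw [Nat.cast_sub (by omega)]; push_cast; ring
      calc (((n - 1).choose (e + 1) : ℕ) : ℝ) * ((e : ℝ) + 1)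
          = (((n - 1).choose (e + 1) * (e + 1) : ℕ) : ℝ) := by push_cast; ring
        _ = (((n - 1).choose e * (n - (e + 1)) : ℕ) : ℝ) := by rw [h0]
        _ = _ := by push_cast [h2]; ring
    have hS : S n = S' n + (((e + 2 : ℕ) : ℝ) - ((e + 1 : ℕ) : ℝ)) * γ ^ (e + 1)
        * ((e + 2).choose (e + 1)) * ((n - 1).choose e) := by
      rw [hSdef, hS'def]
      exact Finset.sum_Icc_succ_top (by omega) _
    have hmu : bdMu γ (e + 2) n = P n + ((e + 2 : ℕ) : ℝ) * γ ^ (e + 2)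
        * ((e + 2).choose (e + 2)) * ((n - 1).choose (e + 1)) := by
      rw [hPdef]
      unfold bdMu
      exact Finset.sum_Icc_succ_top (by omega) _
    rw [hNdef, hMdef]
    simp only [hS, hmu, Nat.choose_succ_self_right, Nat.choose_self]
    push_cast
    linear_combination (-(((e : ℝ) + 2) * γ ^ (e + 2))) * hid
  -- M = O(n^e)
  have hterm1 : (fun n : ℕ => (n : ℝ) * (γ * S' n)) =O[Filter.atTop]
      (fun n : ℕ => (n : ℝ) ^ e) := by
    have hrw : ∀ n : ℕ, (n : ℝ) * (γ * S' n)
        = ∑ i ∈ Finset.Icc 1 e, (γ * ((((e + 2 : ℕ) : ℝ) - i) * γ ^ i * ((e + 2).choose i)))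
            * ((n : ℝ) * ((n - 1).choose (i - 1))) := by
      intro n
      rw [hS'def, Finset.mul_sum, Finset.mul_sum]
      exact Finset.sum_congr rfl (fun i _ => by ring)
    simp only [hrw]
    apply Asymptotics.IsBigO.fun_sum
    intro i hi
    obtain ⟨hi1, hi2⟩ := Finset.mem_Icc.mp hi
    exact ((mul_choose_O' (i - 1)).trans (pow_O' _ _ (by omega))).const_mul_left _
  have hterm2 : (fun n : ℕ => (((e + 2 : ℕ) : ℝ) - 1) * P n) =O[Filter.atTop]
      (fun n : ℕ => (n : ℝ) ^ e) := by
    have hrw : ∀ n : ℕ, (((e + 2 : ℕ) : ℝ) - 1) * P n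
        = ∑ i ∈ Finset.Icc 1 (e + 1), ((((e + 2 : ℕ) : ℝ) - 1) * ((i : ℝ) * γ ^ i * ((e + 2).choose i)))
            * (((n - 1).choose (i - 1)) : ℝ) := by
      intro n
      rw [hPdef, Finset.mul_sum]
      exact Finset.sum_congr rfl (fun i _ => by ring)
    simp only [hrw]
    apply Asymptotics.IsBigO.fun_sum
    intro i hi
    obtain ⟨hi1, hi2⟩ := Finset.mem_Icc.mp hi
    exact ((choose_O' (i - 1)).trans (pow_O' _ _ (by omega))).const_mul_left _
  have hterm3 : (fun n : ℕ => ((e : ℝ) + 2) * γ ^ (e + 2) * ((e : ℝ) + 1)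
      * (((n - 1).choose e : ℕ) : ℝ)) =O[Filter.atTop] (fun n : ℕ => (n : ℝ) ^ e) :=
    (choose_O' e).const_mul_left _
  have hMO : M =O[Filter.atTop] (fun n : ℕ => (n : ℝ) ^ e) := (hterm1.sub hterm2).add hterm3
  have hNO : N =O[Filter.atTop] (fun n : ℕ => (n : ℝ) ^ e) := by
    apply hMO.congr' ?_ (Filter.EventuallyEq.refl _ _)
    filter_upwards [Filter.eventually_ge_atTop (e + 2)] with n hn
    exact (hNM n hn).symm
  -- lower bound on μ
  set B : ℝ := ((e : ℝ) + 2) * γ ^ (e + 2) / (2 ^ (e + 1) * ((e + 1).factorial : ℝ)) with hBdef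
  have hBpos : 0 < B := by
    rw [hBdef]
    have := (e + 1).factorial_pos
    positivity
  have hmulow : ∀ n : ℕ, 2 * e + 4 ≤ n → B * (n : ℝ) ^ (e + 1) ≤ bdMu γ (e + 2) n := by
    intro n hn
    have hnR : (2 * (e : ℝ) + 4) ≤ n := by exact_mod_cast hn
    have hsingle : ((e + 2 : ℕ) : ℝ) * γ ^ (e + 2) * (((e + 2).choose (e + 2) : ℕ) : ℝ)
        * (((n - 1).choose (e + 2 - 1) : ℕ) : ℝ) ≤ bdMu γ (e + 2) n := by
      unfold bdMu
      exact Finset.single_le_sum (f := fun i : ℕ => (i : ℝ) * γ ^ i * (((e + 2).choose i : ℕ) : ℝ)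
          * (((n - 1).choose (i - 1) : ℕ) : ℝ))
        (fun i _ => by positivity) (Finset.mem_Icc.mpr ⟨by omega, le_refl _⟩)
    have hch : ((n : ℝ) / 2) ^ (e + 1) / (((e + 1).factorial : ℕ) : ℝ)
        ≤ (((n - 1).choose (e + 1) : ℕ) : ℝ) := by
      have h1 : ((((n - 1) + 1 - (e + 1) : ℕ)) ^ (e + 1) : ℝ) / ((e + 1).factorial : ℝ)
          ≤ ((n - 1).choose (e + 1) : ℝ) := by
        exact_mod_cast Nat.pow_le_choose (e + 1) (n - 1)
      have h2 : (n : ℝ) / 2 ≤ (((n - 1) + 1 - (e + 1) : ℕ) : ℝ) := by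
        have h3 : (n - 1) + 1 - (e + 1) = n - (e + 1) := by omega
        rw [h3, Nat.cast_sub (by omega)]
        push_cast
        linarith
      refine le_trans ?_ h1
      gcongr
    calc B * (n : ℝ) ^ (e + 1)
        = ((e : ℝ) + 2) * γ ^ (e + 2) * (((n : ℝ) / 2) ^ (e + 1) / ((e + 1).factorial : ℝ)) := by
          rw [hBdef, div_pow]
          have h4 : ((e + 1).factorial : ℝ) ≠ 0 := by
            exact_mod_cast (e + 1).factorial_pos.ne'
          field_simp
      _ ≤ ((e : ℝ) + 2) * γ ^ (e + 2) * (((n - 1).choose (e + 1) : ℕ) : ℝ) := by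
          apply mul_le_mul_of_nonneg_left hch (by positivity)
      _ ≤ bdMu γ (e + 2) n := by
          have hc2 : (e + 2).choose (e + 2) = 1 := Nat.choose_self _
          rw [hc2] at hsingle
          push_cast at hsingle ⊢
          convert hsingle using 2 <;> ring_nf
  -- final assembly
  obtain ⟨A, hA0, hA⟩ := hNO.exists_nonneg
  rw [Asymptotics.isBigO_iff]
  refine ⟨A / B, ?_⟩
  filter_upwards [hA.bound, Filter.eventually_ge_atTop (2 * e + 4)] with n hbound hn
  have hn1 : 1 ≤ n := by omega
  have hn0 : (0 : ℝ) < n := by exact_mod_cast (by omega : 0 < n)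
  have hμ := hμpos n
  rw [heq n hn1]
  have hden : B * (n : ℝ) ^ (e + 2) ≤ (n : ℝ) * bdMu γ (e + 2) n := by
    have := hmulow n hn
    calc B * (n : ℝ) ^ (e + 2) = (n : ℝ) * (B * (n : ℝ) ^ (e + 1)) := by ring
      _ ≤ (n : ℝ) * bdMu γ (e + 2) n := by
          exact mul_le_mul_of_nonneg_left this (le_of_lt hn0)
  have hnum : ‖N n‖ ≤ A * (n : ℝ) ^ e := by
    have := hbound
    rwa [Real.norm_eq_abs ((n:ℝ)^e), abs_of_nonneg (by positivity)] at this
  have hnorm1 : ‖N n / ((n : ℝ) * bdMu γ (e + 2) n)‖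
      = ‖N n‖ / ((n : ℝ) * bdMu γ (e + 2) n) := by
    rw [norm_div, Real.norm_eq_abs ((n:ℝ) * _), abs_of_pos (mul_pos hn0 hμ)]
  rw [hnorm1]
  have hBn : 0 < B * (n : ℝ) ^ (e + 2) := by positivity
  calc ‖N n‖ / ((n : ℝ) * bdMu γ (e + 2) n)
      ≤ (A * (n : ℝ) ^ e) / (B * (n : ℝ) ^ (e + 2)) :=
        div_le_div₀ (by positivity) hnum hBn hden
    _ = A / B * ‖1 / (n : ℝ) ^ 2‖ := by
        rw [Real.norm_eq_abs, abs_of_nonneg (by positivity), pow_add]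
        field_simp
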